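/- Let G be a finite connected graph, and let (κ_1,…,κ_{|V|−1}) be an integral basis of the cut group B^1(G,ℤ) ⊂ C^1(G,ℤ). Then in the (|V|−1)-th exterior power of C^1(G,ℤ), κ_1 ∧ … ∧ κ_{|V|−1} = Σ_{T spanning tree} ε_T · e*_T, where e*_T is the wedge of the dual basis vectors of the edges of T (in a fixed order) and ε_T ∈ {−1,+1}. -/

import Mathlib

/-! Framework: a finite graph with vertex type `V`, linearly ordered edge type `E`
(positively oriented edges), and maps `head, tail : E → V`.  The cochain group
`C^1(G,ℤ)` is modeled as `E → ℤ` (coordinates in the dual canonical basis `e*`). -/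

section Graph

variable {V E : Type*} [Fintype V] [Fintype E] [DecidableEq V] [DecidableEq E]
  [LinearOrder E]

/-- The coboundary operator `δ : C⁰(G,ℤ) → C¹(G,ℤ)`, `(δ f)(e) = f(head e) − f(tail e)`;
its image is the cut group `B¹(G,ℤ)`. -/
def cobd (head tail : E → V) : (V → ℤ) →ₗ[ℤ] (E → ℤ) where
  toFun f := fun e => f (head e) - f (tail e)
  map_add' f g := by funext e; simp; ring
  map_smul' r f := by funext e; simp [mul_sub]

/-- Two vertices are connected through the edges of `T`. -/
def Conn (head tail : E → V) (T : Finset E) (v w : V) : Prop :=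
  Relation.ReflTransGen
    (fun a b => ∃ e ∈ T, (head e = a ∧ tail e = b) ∨ (head e = b ∧ tail e = a)) v w

/-- `T` is a spanning tree. -/
def IsSpanningTree (head tail : E → V) (T : Finset E) : Prop :=
  T.card + 1 = Fintype.card V ∧ ∀ v w : V, Conn head tail T v w

/-- The wedge `e*_S` of the dual basis vectors of the edges of `S`, taken in the fixed
linear order on `E`, in the exterior algebra of `C¹(G,ℤ)`. -/
noncomputable def eStarWedge (S : Finset E) : ExteriorAlgebra ℤ (E → ℤ) :=
  ((S.sort (· ≤ ·)).map (fun e => ExteriorAlgebra.ι ℤ (Pi.single e (1 : ℤ)))).prod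

/-- The wedge `κ₁ ∧ … ∧ κₙ` of a family of cochains. -/
noncomputable def cochainWedge {n : ℕ} (κ : Fin n → (E → ℤ)) :
    ExteriorAlgebra ℤ (E → ℤ) :=
  ((List.finRange n).map (fun i => ExteriorAlgebra.ι ℤ (κ i))).prod

/-- The change-of-basis determinant `det(ℬ/ℬ_T)` between a cut basis `κ` and the
fundamental cut basis of a spanning tree `T`: since `κ(T,e)` is the unique fundamental
cut with a (unit) coordinate on `e ∈ T`, this is the determinant of the matrix of
coordinates of the `κᵢ` on the edges of `T` (in the fixed order). -/
noncomputable def cutCbDet {n : ℕ} (κ : Fin n → (E → ℤ)) (T : Finset E) : ℤ :=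
  if h : (T.sort (· ≤ ·)).length = n then
    Matrix.det (Matrix.of fun i j : Fin n =>
      κ j ((T.sort (· ≤ ·)).get (Fin.cast h.symm i)))
  else 0

end Graph

open Classical

set_option linter.unusedSectionVars false

section Aux

variable {V E : Type*} [Fintype V] [Fintype E] [DecidableEq V] [DecidableEq E]
  [LinearOrder E]

lemma cobd_apply (head tail : E → V) (f : V → ℤ) (e : E) :
    cobd head tail f e = f (head e) - f (tail e) := rfl

lemma conn_symm {head tail : E → V} {T : Finset E} {v w : V}
    (h : Conn head tail T v w) : Conn head tail T w v := by
  have hsym : Symmetric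
      (fun a b => ∃ e ∈ T, (head e = a ∧ tail e = b) ∨ (head e = b ∧ tail e = a)) := by
    rintro a b ⟨e, he, h'⟩
    exact ⟨e, he, h'.symm⟩
  exact (@Relation.ReflTransGen.symmetric _ _ ⟨fun a b hab => hsym hab⟩).symm _ _ h

lemma conn_trans {head tail : E → V} {T : Finset E} {u v w : V}
    (h : Conn head tail T u v) (h' : Conn head tail T v w) : Conn head tail T u w :=
  Relation.ReflTransGen.trans h h'

lemma conn_single {head tail : E → V} {T : Finset E} {e : E} (he : e ∈ T) :
    Conn head tail T (head e) (tail e) :=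
  Relation.ReflTransGen.single ⟨e, he, Or.inl ⟨rfl, rfl⟩⟩

/-- indicator function of a predicate -/
noncomputable def ind (P : V → Prop) : V → ℤ := fun v => if P v then 1 else 0

lemma ind_eq_of_iff {P : V → Prop} {v w : V} (h : P v ↔ P w) : ind P v = ind P w := by
  unfold ind
  by_cases hv : P v
  · rw [if_pos hv, if_pos (h.mp hv)]
  · rw [if_neg hv, if_neg (fun hw => hv (h.mpr hw))]

/-- a function in the kernel of the restricted coboundary is constant on connected
components -/
lemma eq_of_conn_of_ker {R : Type*} [AddCommGroup R] {head tail : E → V} {T : Finset E}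
    {f : V → R} (hf : ∀ e ∈ T, f (head e) = f (tail e)) {v w : V}
    (h : Conn head tail T v w) : f v = f w := by
  induction h with
  | refl => rfl
  | tail _ hstep ih =>
    obtain ⟨e, he, h'⟩ := hstep
    rcases h' with ⟨h1, h2⟩ | ⟨h1, h2⟩
    · rw [ih, ← h1, ← h2, hf e he]
    · rw [ih, ← h1, ← h2, (hf e he).symm]

/-- crossing lemma: if `a` satisfies `P` and `b` does not, any `univ`-path from
`a` to `b` contains a crossing edge. -/
lemma exists_crossing {head tail : E → V} (P : V → Prop) {a b : V}
    (h : Conn head tail (Finset.univ : Finset E) a b) (ha : P a) (hb : ¬ P b) :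
    ∃ e : E, ¬ (P (head e) ↔ P (tail e)) := by
  induction h with
  | refl => exact absurd ha hb
  | @tail c d _ hstep ih =>
    by_cases hc : P c
    · obtain ⟨e, _, h'⟩ := hstep
      rcases h' with ⟨h1, h2⟩ | ⟨h1, h2⟩
      · exact ⟨e, fun hiff => hb (h2 ▸ hiff.mp (h1 ▸ hc))⟩
      · exact ⟨e, fun hiff => hb (h1 ▸ hiff.mpr (h2 ▸ hc))⟩
    · exact ih hc

/-- if `S` connects all of `V` then `|V| ≤ |S| + 1`. -/
lemma card_le_of_conn (head tail : E → V) (S : Finset E)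
    (h : ∀ v w : V, Conn head tail S v w) : Fintype.card V ≤ S.card + 1 := by
  rcases isEmpty_or_nonempty V with hV | hV
  · simp [Fintype.card_eq_zero]
  obtain ⟨v₀⟩ := hV
  classical
  -- the linear map (V → ℚ) → (S → ℚ) given by differences along edges of S
  let L : (V → ℚ) →ₗ[ℚ] (S → ℚ) :=
    { toFun := fun f => fun e => f (head e.1) - f (tail e.1)
      map_add' := by intro f g; funext e; simp; ring
      map_smul' := by intro r f; funext e; simp [mul_sub] }
  have hker : LinearMap.ker L ≤ Submodule.span ℚ {(fun _ => 1 : V → ℚ)} := by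
    intro f hf
    have hfc : ∀ e ∈ S, f (head e) = f (tail e) := by
      intro e he
      have := congrFun hf ⟨e, he⟩
      simpa [L, sub_eq_zero] using this
    have : f = f v₀ • (fun _ => 1 : V → ℚ) := by
      funext w
      have := eq_of_conn_of_ker hfc (h v₀ w)
      simp [← this]
    rw [this]
    exact Submodule.smul_mem _ _ (Submodule.mem_span_singleton_self _)
  have h1 : Module.finrank ℚ (LinearMap.ker L) ≤ 1 := by
    calc Module.finrank ℚ (LinearMap.ker L)
        ≤ Module.finrank ℚ (Submodule.span ℚ {(fun _ => 1 : V → ℚ)}) :=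
          Submodule.finrank_mono hker
      _ ≤ 1 := by
          simpa using finrank_span_le_card ({(fun _ => 1 : V → ℚ)} : Set (V → ℚ))
  have h2 : Module.finrank ℚ (LinearMap.range L) ≤ S.card := by
    calc Module.finrank ℚ (LinearMap.range L)
        ≤ Module.finrank ℚ (S → ℚ) := Submodule.finrank_le _
      _ = S.card := by simp [Module.finrank_fintype_fun_eq_card]
  have h3 := LinearMap.finrank_range_add_finrank_ker L
  have h4 : Module.finrank ℚ (V → ℚ) = Fintype.card V := by
    simp [Module.finrank_fintype_fun_eq_card]
  omega

lemma not_conn_erase_of_spanning {head tail : E → V} {T : Finset E}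
    (hT : IsSpanningTree head tail T) {e : E} (he : e ∈ T) :
    ¬ Conn head tail (T.erase e) (head e) (tail e) := by
  intro hcon
  have hall : ∀ v w : V, Conn head tail (T.erase e) v w := by
    intro v w
    have h := hT.2 v w
    induction h with
    | refl => exact Relation.ReflTransGen.refl
    | @tail c d _ hstep ih =>
      refine conn_trans ih ?_
      obtain ⟨e', he', h'⟩ := hstep
      by_cases hee : e' = e
      · subst hee
        rcases h' with ⟨h1, h2⟩ | ⟨h1, h2⟩
        · exact h1 ▸ h2 ▸ hcon
        · exact h1 ▸ h2 ▸ (conn_symm hcon)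
      · exact Relation.ReflTransGen.single ⟨e', Finset.mem_erase.mpr ⟨hee, he'⟩, h'⟩
  have hb := card_le_of_conn head tail (T.erase e) hall
  have hc := Finset.card_erase_of_mem he
  have hpos : 1 ≤ T.card := Finset.card_pos.mpr ⟨e, he⟩
  have h1 := hT.1
  omega

/-- The fundamental cut of the spanning tree `T` at the edge `e`. -/
noncomputable def fundCut (head tail : E → V) (T : Finset E) (e : E) : E → ℤ :=
  cobd head tail (ind (Conn head tail (T.erase e) (head e)))

lemma fundCut_mem_range (head tail : E → V) (T : Finset E) (e : E) :
    fundCut head tail T e ∈ LinearMap.range (cobd head tail) :=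
  ⟨_, rfl⟩

lemma fundCut_apply_self {head tail : E → V} {T : Finset E}
    (hT : IsSpanningTree head tail T) {e : E} (he : e ∈ T) :
    fundCut head tail T e e = 1 := by
  unfold fundCut
  rw [cobd_apply]
  unfold ind
  rw [if_pos (show Conn head tail (T.erase e) (head e) (head e) from Relation.ReflTransGen.refl),
    if_neg (not_conn_erase_of_spanning hT he)]
  norm_num

lemma fundCut_apply_ne {head tail : E → V} {T : Finset E}
    {e e' : E} (he' : e' ∈ T) (hne : e' ≠ e) :
    fundCut head tail T e e' = 0 := by
  unfold fundCut
  rw [cobd_apply]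
  have he'' : e' ∈ T.erase e := Finset.mem_erase.mpr ⟨hne, he'⟩
  have hiff : Conn head tail (T.erase e) (head e) (head e') ↔
      Conn head tail (T.erase e) (head e) (tail e') :=
    ⟨fun h => conn_trans h (conn_single he''),
     fun h => conn_trans h (conn_symm (conn_single he''))⟩
  rw [ind_eq_of_iff hiff, sub_self]

section EdgeEnum

variable {S : Finset E} {n : ℕ}

lemma sort_length_eq (hS : S.card = n) : (S.sort (· ≤ ·)).length = n := by
  rw [Finset.length_sort, hS]

/-- Enumeration of the edges of `S` in sorted order. -/
noncomputable def edgeEnum (S : Finset E) {n : ℕ} (h : (S.sort (· ≤ ·)).length = n) :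
    Fin n → E := fun i => (S.sort (· ≤ ·)).get (Fin.cast h.symm i)

lemma edgeEnum_mem (h : (S.sort (· ≤ ·)).length = n) (i : Fin n) :
    edgeEnum S h i ∈ S := by
  rw [← Finset.mem_sort (α := E) (· ≤ ·)]
  exact List.get_mem _ _

lemma edgeEnum_injective (h : (S.sort (· ≤ ·)).length = n) :
    Function.Injective (edgeEnum S h) := by
  intro i j hij
  have hnd := Finset.sort_nodup S (· ≤ ·)
  have := (List.nodup_iff_injective_get).mp hnd hij
  simpa [Fin.ext_iff] using this

lemma edgeEnum_image (h : (S.sort (· ≤ ·)).length = n) :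
    Finset.image (edgeEnum S h) Finset.univ = S := by
  apply Finset.eq_of_subset_of_card_le
  · intro e he
    obtain ⟨i, _, rfl⟩ := Finset.mem_image.mp he
    exact edgeEnum_mem h i
  · rw [Finset.card_image_of_injective _ (edgeEnum_injective h), Finset.card_univ,
      Fintype.card_fin]
    have := Finset.length_sort (α := E) (· ≤ ·) (s := S)
    omega

lemma sort_eq_ofFn_edgeEnum (h : (S.sort (· ≤ ·)).length = n) :
    S.sort (· ≤ ·) = List.ofFn (edgeEnum S h) := by
  apply List.ext_get
  · simp [h]
  · intro k h1 h2
    simp [edgeEnum]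

lemma cutCbDet_eq {κ : Fin n → (E → ℤ)} (h : (S.sort (· ≤ ·)).length = n) :
    cutCbDet κ S = Matrix.det (Matrix.of fun i j : Fin n => κ j (edgeEnum S h i)) := by
  rw [cutCbDet, dif_pos h]
  rfl

lemma eStarWedge_eq (h : (S.sort (· ≤ ·)).length = n) :
    eStarWedge S = ExteriorAlgebra.ιMulti ℤ n
      (fun i => Pi.single (edgeEnum S h i) (1 : ℤ)) := by
  rw [ExteriorAlgebra.ιMulti_apply, eStarWedge, sort_eq_ofFn_edgeEnum h, List.map_ofFn]
  rfl

end EdgeEnum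

lemma cochainWedge_eq_ιMulti {n : ℕ} (κ : Fin n → (E → ℤ)) :
    cochainWedge κ = ExteriorAlgebra.ιMulti ℤ n κ := by
  rw [ExteriorAlgebra.ιMulti_apply, cochainWedge, List.ofFn_eq_map]

lemma cutCbDet_eq_zero_of_not_tree {head tail : E → V}
    (hconn : ∀ v w : V, Conn head tail (Finset.univ : Finset E) v w)
    {n : ℕ} (hn : n + 1 = Fintype.card V) {κ : Fin n → (E → ℤ)}
    (hκ_span : Submodule.span ℤ (Set.range κ) = LinearMap.range (cobd head tail))
    {S : Finset E} (hS : S.card = n) (hT : ¬ IsSpanningTree head tail S) :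
    cutCbDet κ S = 0 := by
  obtain ⟨v, w, hvw⟩ : ∃ v w : V, ¬ Conn head tail S v w := by
    by_contra hcon
    push_neg at hcon
    exact hT ⟨by omega, hcon⟩
  set P : V → Prop := Conn head tail S v with hP
  set g : E → ℤ := cobd head tail (ind P) with hg
  have hgS : ∀ e ∈ S, g e = 0 := by
    intro e he
    rw [hg, cobd_apply]
    have hiff : P (head e) ↔ P (tail e) :=
      ⟨fun h => conn_trans h (conn_single he),
       fun h => conn_trans h (conn_symm (conn_single he))⟩
    rw [ind_eq_of_iff hiff, sub_self]
  have hgne : g ≠ 0 := by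
    obtain ⟨e, hcross⟩ := exists_crossing P (hconn v w) Relation.ReflTransGen.refl hvw
    intro h0
    apply hcross
    have h1 : ind P (head e) = ind P (tail e) := by
      have := congrFun h0 e
      rw [hg, cobd_apply] at this
      simp only [Pi.zero_apply] at this
      linarith
    unfold ind at h1
    by_cases hh : P (head e) <;> by_cases ht : P (tail e) <;>
      simp [hh, ht] at h1 ⊢
  have hmem : g ∈ Submodule.span ℤ (Set.range κ) := hκ_span ▸ ⟨ind P, rfl⟩
  obtain ⟨c, hc⟩ := (Submodule.mem_span_range_iff_exists_fun ℤ).mp hmem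
  have hlen := sort_length_eq hS
  set s := edgeEnum S hlen with hsdef
  rw [cutCbDet_eq hlen]
  by_contra hdet
  have hc0 : c = 0 := by
    apply Matrix.eq_zero_of_mulVec_eq_zero hdet
    funext i
    have h2 : ∑ j, c j * κ j (s i) = g (s i) := by
      rw [← hc]
      simp [Finset.sum_apply]
    have h3 : g (s i) = 0 := hgS _ (edgeEnum_mem hlen i)
    calc (Matrix.of fun i j => κ j (edgeEnum S hlen i)).mulVec c i
        = ∑ j, κ j (s i) * c j := by simp [Matrix.mulVec, dotProduct, hsdef]
      _ = ∑ j, c j * κ j (s i) := by simp [mul_comm]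
      _ = 0 := by rw [h2, h3]
  rw [hc0] at hc
  simp at hc
  exact hgne hc.symm

lemma cutCbDet_pm_one {head tail : E → V}
    {n : ℕ} (hn : n + 1 = Fintype.card V) {κ : Fin n → (E → ℤ)}
    (hκ_span : Submodule.span ℤ (Set.range κ) = LinearMap.range (cobd head tail))
    {T : Finset E} (hT : IsSpanningTree head tail T) :
    cutCbDet κ T = 1 ∨ cutCbDet κ T = -1 := by
  have hS : T.card = n := by have := hT.1; omega
  have hlen := sort_length_eq hS
  set s := edgeEnum T hlen with hsdef
  have hNex : ∀ i : Fin n, ∃ c : Fin n → ℤ, ∑ j, c j • κ j = fundCut head tail T (s i) :=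
    fun i => (Submodule.mem_span_range_iff_exists_fun ℤ).mp
      (hκ_span ▸ fundCut_mem_range head tail T (s i))
  choose N hN using hNex
  set M : Matrix (Fin n) (Fin n) ℤ := Matrix.of fun i j => κ j (s i) with hM
  have hmul : (Matrix.of N) * M.transpose = (1 : Matrix (Fin n) (Fin n) ℤ) := by
    ext i i'
    have h1 : ∑ j, N i j * κ j (s i') = fundCut head tail T (s i) (s i') := by
      have := congrFun (hN i) (s i')
      simpa [Finset.sum_apply] using this
    have h2 : fundCut head tail T (s i) (s i') = if i = i' then 1 else 0 := by
      by_cases hii : i = i'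
      · subst hii
        rw [if_pos rfl]
        exact fundCut_apply_self hT (edgeEnum_mem hlen i)
      · rw [if_neg hii]
        exact fundCut_apply_ne (edgeEnum_mem hlen i')
          (fun h => hii ((edgeEnum_injective hlen h).symm))
    rw [Matrix.mul_apply, Matrix.one_apply]
    calc ∑ j, (Matrix.of N) i j * M.transpose j i' = ∑ j, N i j * κ j (s i') := rfl
      _ = if i = i' then 1 else 0 := by rw [h1, h2]
  have hdet : (Matrix.of N).det * M.det = 1 := by
    have := congrArg (fun A : Matrix (Fin n) (Fin n) ℤ => A.det) hmul
    rwa [Matrix.det_mul, Matrix.det_transpose, Matrix.det_one] at this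
  have hunit : IsUnit M.det :=
    IsUnit.of_mul_eq_one _ (by rw [mul_comm]; exact hdet)
  rw [cutCbDet_eq hlen]
  exact Int.isUnit_iff.mp hunit

set_option maxHeartbeats 1600000 in
lemma wedge_expansion {n : ℕ} (κ : Fin n → (E → ℤ)) :
    cochainWedge κ = ∑ S ∈ Finset.univ.filter (fun S : Finset E => S.card = n),
      cutCbDet κ S • eStarWedge S := by
  classical
  have hκ : κ = fun i => ∑ e : E, κ i e • Pi.single e (1 : ℤ) := by
    funext i e'
    rw [Finset.sum_apply]
    simp [Pi.single_apply, mul_ite]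
  have h1 : cochainWedge κ
      = ∑ r : Fin n → E, (∏ i, κ i (r i)) •
          ExteriorAlgebra.ιMulti ℤ n (fun i => Pi.single (r i) (1 : ℤ)) := by
    rw [cochainWedge_eq_ιMulti]
    calc ExteriorAlgebra.ιMulti ℤ n κ
        = (ExteriorAlgebra.ιMulti ℤ n).toMultilinearMap
            (fun i => ∑ e : E, κ i e • Pi.single e (1 : ℤ)) := by rw [← hκ]; rfl
      _ = ∑ r : Fin n → E, (ExteriorAlgebra.ιMulti ℤ n).toMultilinearMap
            (fun i => κ i (r i) • Pi.single (r i) (1 : ℤ)) :=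
          MultilinearMap.map_sum _ _
      _ = ∑ r : Fin n → E, (∏ i, κ i (r i)) •
            ExteriorAlgebra.ιMulti ℤ n (fun i => Pi.single (r i) (1 : ℤ)) :=
          Finset.sum_congr rfl fun r _ => MultilinearMap.map_smul_univ _ _ _
  rw [h1, ← Finset.sum_filter_add_sum_filter_not Finset.univ
    (fun r : Fin n → E => Function.Injective r)]
  have h2 : ∑ r ∈ Finset.univ.filter (fun r : Fin n → E => ¬ Function.Injective r),
      (∏ i, κ i (r i)) • ExteriorAlgebra.ιMulti ℤ n (fun i => Pi.single (r i) (1 : ℤ))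
      = (0 : ExteriorAlgebra ℤ (E → ℤ)) := by
    apply Finset.sum_eq_zero
    intro r hr
    rw [Finset.mem_filter] at hr
    have hni : ¬ Function.Injective (fun i => (Pi.single (r i) (1 : ℤ) : E → ℤ)) := by
      intro hinj
      exact hr.2 (fun i j hij => hinj
        (show (Pi.single (r i) (1 : ℤ) : E → ℤ) = (Pi.single (r j) (1 : ℤ) : E → ℤ) by
          rw [hij]))
    rw [AlternatingMap.map_eq_zero_of_not_injective _ _ hni, smul_zero]
  rw [h2, add_zero]
  rw [← Finset.sum_fiberwise_of_maps_to
    (g := fun r : Fin n → E => Finset.image r Finset.univ)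
    (t := (Finset.univ : Finset (Finset E))) (fun _ _ => Finset.mem_univ _)]
  conv_rhs => rw [Finset.sum_filter]
  apply Finset.sum_congr rfl
  intro S _
  by_cases hcard : S.card = n
  · rw [if_pos hcard]
    have hlen := sort_length_eq hcard
    set s := edgeEnum S hlen with hsdef
    rw [cutCbDet_eq hlen, eStarWedge_eq hlen, Matrix.det_apply, Finset.sum_smul]
    -- bijection between permutations and injective maps with image `S`
    have hsmem : ∀ i, s i ∈ S := edgeEnum_mem hlen
    have hsinj : Function.Injective s := edgeEnum_injective hlen
    have hsimg : Finset.image s Finset.univ = S := edgeEnum_image hlen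
    refine (Finset.sum_bij (fun (σ : Equiv.Perm (Fin n)) _ => s ∘ σ) ?_ ?_ ?_ ?_).symm
    · intro σ _
      simp only [Finset.mem_filter, Finset.mem_univ, true_and]
      constructor
      · exact hsinj.comp σ.injective
      · rw [show Finset.image (s ∘ σ) Finset.univ = Finset.image s (Finset.image σ Finset.univ)
          from (Finset.image_image).symm,
          Finset.image_univ_equiv, hsimg]
    · intro σ₁ _ σ₂ _ heq
      apply Equiv.ext
      intro i
      exact hsinj (congrFun heq i)
    · intro r hr
      simp only [Finset.mem_filter, Finset.mem_univ, true_and] at hr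
      obtain ⟨hrinj, hrimg⟩ := hr
      have hsbij : Function.Bijective (fun i => (⟨s i, hsmem i⟩ : {x // x ∈ S})) := by
        constructor
        · intro i j hij
          exact hsinj (congrArg Subtype.val hij)
        · intro ⟨e, he⟩
          have : e ∈ Finset.image s Finset.univ := hsimg.symm ▸ he
          obtain ⟨i, _, hi⟩ := Finset.mem_image.mp this
          exact ⟨i, Subtype.ext hi⟩
      have hrbij : Function.Bijective
          (fun i => (⟨r i, by rw [← hrimg]; exact Finset.mem_image_of_mem r (Finset.mem_univ i)⟩ :
            {x // x ∈ S})) := by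
        constructor
        · intro i j hij
          exact hrinj (congrArg Subtype.val hij)
        · intro ⟨e, he⟩
          have : e ∈ Finset.image r Finset.univ := hrimg.symm ▸ he
          obtain ⟨i, _, hi⟩ := Finset.mem_image.mp this
          exact ⟨i, Subtype.ext hi⟩
      let es := Equiv.ofBijective _ hsbij
      let er := Equiv.ofBijective _ hrbij
      refine ⟨er.trans es.symm, Finset.mem_univ _, ?_⟩
      funext i
      show s (es.symm (er i)) = r i
      have h3 : es (es.symm (er i)) = er i := es.apply_symm_apply (er i)
      have h4 : (es (es.symm (er i))).1 = s (es.symm (er i)) := rfl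
      have h5 : ((er i : {x // x ∈ S})).1 = r i := rfl
      rw [← h4, h3, h5]
    · intro σ _
      have hperm : ExteriorAlgebra.ιMulti ℤ n
            ((fun i => (Pi.single (s i) (1 : ℤ) : E → ℤ)) ∘ σ)
          = Equiv.Perm.sign σ • ExteriorAlgebra.ιMulti ℤ n
            (fun i => (Pi.single (s i) (1 : ℤ) : E → ℤ)) :=
        AlternatingMap.map_perm _ _ σ
      have hcomp : (fun i => (Pi.single ((s ∘ σ) i) (1 : ℤ) : E → ℤ))
          = (fun i => (Pi.single (s i) (1 : ℤ) : E → ℤ)) ∘ σ := rfl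
      rw [hcomp, hperm]
      have hM : ∀ i, (Matrix.of fun i j : Fin n => κ j (s i)) (σ i) i = κ i (s (σ i)) :=
        fun i => rfl
      simp only [hM, Function.comp]
      simp only [← hsdef]
      simp only [Units.smul_def, smul_smul, smul_eq_mul]
      rw [mul_comm]
      simp only [Matrix.of_apply]
  · rw [if_neg hcard]
    apply Finset.sum_eq_zero
    intro r hr
    simp only [Finset.mem_filter, Finset.mem_univ, true_and] at hr
    exfalso
    apply hcard
    rw [← hr.2, Finset.card_image_of_injective _ hr.1, Finset.card_univ, Fintype.card_fin]

end Aux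

/-- **The Kirchhoff cut–tree identity.**  Let `G` be a finite connected graph and
`(κ₁,…,κ_{|V|−1})` an integral basis of the cut group `B¹(G,ℤ) = im δ`.  Then each
change-of-basis determinant `ε_T` is `±1` and, in the `(|V|−1)`-st exterior power of
`C¹(G,ℤ)`, `κ₁ ∧ … ∧ κ_{|V|−1} = Σ_{T spanning tree} ε_T • e*_T`. -/
theorem kirchhoff_cut_tree_identity
    {V E : Type*} [Fintype V] [Fintype E] [DecidableEq V] [DecidableEq E]
    [LinearOrder E] (head tail : E → V)
    (hconn : ∀ v w : V, Conn head tail (Finset.univ : Finset E) v w)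
    (n : ℕ) (hn : n + 1 = Fintype.card V)
    (κ : Fin n → (E → ℤ))
    (hκ_indep : LinearIndependent ℤ κ)
    (hκ_span : Submodule.span ℤ (Set.range κ) = LinearMap.range (cobd head tail)) :
    (∀ T : Finset E, IsSpanningTree head tail T →
        cutCbDet κ T = 1 ∨ cutCbDet κ T = -1) ∧
    cochainWedge κ =
      ∑ T : Finset E,
        if IsSpanningTree head tail T then cutCbDet κ T • eStarWedge T else 0 := by
  constructor
  · intro T hT
    exact cutCbDet_pm_one hn hκ_span hT
  · rw [wedge_expansion κ, Finset.sum_filter]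
    apply Finset.sum_congr rfl
    intro S _
    by_cases hST : IsSpanningTree head tail S
    · rw [if_pos hST, if_pos (show S.card = n by have := hST.1; omega)]
    · rw [if_neg hST]
      by_cases hcard : S.card = n
      · rw [if_pos hcard, cutCbDet_eq_zero_of_not_tree hconn hn hκ_span hcard hST, zero_smul]
      · rw [if_neg hcard]
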